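/- Let X₁ be uniform on [0..k−1], U uniform on {0,1}, with X₁ and U independent, and let X₂ be a random variable with |support(X₂)| ≤ k such that H(U | X₁, X₂) = H(X₂ | X₁, U) = H(X₁ | X₂, U) = 0. Then U is independent of X₂, and X₂ is uniform on a set of size exactly k. -/

import Mathlib

open MeasureTheory ENNReal

/-- Shannon entropy (in nats) of a finitely-valued random variable. -/
noncomputable def ent {Ω α : Type*} [MeasurableSpace Ω] [Fintype α]
    (μ : Measure Ω) (X : Ω → α) : ℝ :=
  ∑ a : α, Real.negMulLog ((μ (X ⁻¹' {a})).toReal)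

/-- Conditional Shannon entropy H(X | Y) = H(X, Y) - H(Y). -/
noncomputable def condEnt {Ω α β : Type*} [MeasurableSpace Ω] [Fintype α] [Fintype β]
    (μ : Measure Ω) (X : Ω → α) (Y : Ω → β) : ℝ :=
  ent μ (fun ω => (X ω, Y ω)) - ent μ Y

lemma aux_rw (t : ℝ) : Real.negMulLog t = t * (-Real.log t) := by
  rw [Real.negMulLog]; ring

lemma aux_ge {c t : ℝ} (h0 : 0 ≤ t) (h1 : t ≤ c) :
    t * (-Real.log c) ≤ Real.negMulLog t := by
  rw [aux_rw]
  rcases eq_or_lt_of_le h0 with h|h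
  · simp [← h]
  · exact mul_le_mul_of_nonneg_left (neg_le_neg (Real.log_le_log h h1)) h0

lemma aux_ge_eq {c t : ℝ} (hc : 0 < c) (h0 : 0 ≤ t)
    (he : t * (-Real.log c) = Real.negMulLog t) : t = 0 ∨ t = c := by
  rcases eq_or_lt_of_le h0 with h|h
  · exact Or.inl h.symm
  · right
    rw [aux_rw] at he
    have := mul_left_cancel₀ (ne_of_gt h) he
    have hlog : Real.log t = Real.log c := by
      have := neg_injective this; linarith
    calc t = Real.exp (Real.log t) := (Real.exp_log h).symm
    _ = Real.exp (Real.log c) := by rw [hlog]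
    _ = c := Real.exp_log hc

lemma aux_le {c t : ℝ} (hc : 0 < c) (h : t = 0 ∨ c ≤ t) :
    Real.negMulLog t ≤ t * (-Real.log c) := by
  rw [aux_rw]
  rcases h with h|h
  · simp [h]
  · exact mul_le_mul_of_nonneg_left (neg_le_neg (Real.log_le_log hc h)) (le_trans hc.le h)

lemma aux_le_eq {c t : ℝ} (hc : 0 < c) (h : t = 0 ∨ c ≤ t)
    (he : Real.negMulLog t = t * (-Real.log c)) : t = 0 ∨ t = c := by
  rcases h with h|h
  · exact Or.inl h
  · right
    have ht : 0 < t := lt_of_lt_of_le hc h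
    rw [aux_rw] at he
    have := mul_left_cancel₀ (ne_of_gt ht) he
    have hlog : Real.log t = Real.log c := by
      have := neg_injective this.symm; linarith
    calc t = Real.exp (Real.log t) := (Real.exp_log ht).symm
    _ = Real.exp (Real.log c) := by rw [hlog]
    _ = c := Real.exp_log hc

lemma meas_sub {Ω ι : Type*} [MeasurableSpace Ω] [Fintype ι] (μ : Measure Ω)
    (s : Set Ω) (t : ι → Set Ω) (h : s ⊆ ⋃ i, t i) : μ s ≤ ∑ i, μ (t i) :=
  (measure_mono h).trans ((measure_iUnion_le t).trans_eq (tsum_fintype _))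

lemma meas_sub_real {Ω ι : Type*} [MeasurableSpace Ω] [Fintype ι] (μ : Measure Ω)
    [IsFiniteMeasure μ] (s : Set Ω) (t : ι → Set Ω) (h : s ⊆ ⋃ i, t i) :
    (μ s).toReal ≤ ∑ i, (μ (t i)).toReal := by
  rw [← ENNReal.toReal_sum (fun i _ => measure_ne_top μ _)]
  refine ENNReal.toReal_mono ?_ (meas_sub μ s t h)
  exact (ENNReal.sum_lt_top.2 fun i _ => measure_lt_top μ _).ne

set_option maxHeartbeats 2000000 in
/-- the independence step of the cycles checker. -/
theorem stmt13 {Ω β : Type*} [MeasurableSpace Ω] (μ : Measure Ω) [IsProbabilityMeasure μ]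
    [Fintype β] (k : ℕ) (hk : 0 < k) (X₁ : Ω → Fin k) (U : Ω → ZMod 2) (X₂ : Ω → β)
    (hX₁U : ∀ (x : Fin k) (u : ZMod 2),
      μ {ω | X₁ ω = x ∧ U ω = u} = ((2 * k : ℕ) : ℝ≥0∞)⁻¹)
    (hsupp : Set.ncard {z : β | μ (X₂ ⁻¹' {z}) ≠ 0} ≤ k)
    (h1 : condEnt μ U (fun ω => (X₁ ω, X₂ ω)) = 0)
    (h2 : condEnt μ X₂ (fun ω => (X₁ ω, U ω)) = 0)
    (h3 : condEnt μ X₁ (fun ω => (X₂ ω, U ω)) = 0) :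
    (∀ (u : ZMod 2) (z : β),
      μ {ω | U ω = u ∧ X₂ ω = z} = μ (U ⁻¹' {u}) * μ (X₂ ⁻¹' {z})) ∧
    Set.ncard {z : β | μ (X₂ ⁻¹' {z}) ≠ 0} = k ∧
    (∀ z : β, μ (X₂ ⁻¹' {z}) ≠ 0 → μ (X₂ ⁻¹' {z}) = ((k : ℕ) : ℝ≥0∞)⁻¹) := by
  classical
  have hkR : (0:ℝ) < (k:ℝ) := by exact_mod_cast hk
  set nR : ℝ := ((2 * k : ℕ) : ℝ) with hnR
  have hnR' : nR = 2 * (k:ℝ) := by push_cast [hnR]; ring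
  have hnR1 : 1 < nR := by rw [hnR']; linarith [hkR, (by exact_mod_cast hk : (1:ℝ) ≤ (k:ℝ))]
  set c : ℝ := nR⁻¹ with hcdef
  have hc0 : 0 < c := by rw [hcdef]; positivity
  set L : ℝ := -Real.log c with hLdef
  have hL0 : 0 < L := by
    rw [hLdef, hcdef, Real.log_inv, neg_neg]
    exact Real.log_pos hnR1
  have hfin : ∀ s : Set Ω, μ s ≠ ⊤ := fun s => measure_ne_top μ s
  set p : Fin k → β → ZMod 2 → ℝ :=
    fun x z u => (μ {ω | X₁ ω = x ∧ X₂ ω = z ∧ U ω = u}).toReal with hpdef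
  set q : β → ZMod 2 → ℝ := fun z u => (μ {ω | X₂ ω = z ∧ U ω = u}).toReal with hqdef
  have hp0 : ∀ x z u, 0 ≤ p x z u := fun x z u => ENNReal.toReal_nonneg
  have hq0 : ∀ z u, 0 ≤ q z u := fun z u => ENNReal.toReal_nonneg
  have hcE : (((2 * k : ℕ) : ℝ≥0∞)⁻¹).toReal = c := by
    rw [ENNReal.toReal_inv, hcdef, hnR]
    norm_num
  have hXU : ∀ x u, (μ {ω | X₁ ω = x ∧ U ω = u}).toReal = c := by
    intro x u; rw [hX₁U x u, hcE]
  have hpc : ∀ x z u, p x z u ≤ c := by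
    intro x z u
    have hsub : {ω | X₁ ω = x ∧ X₂ ω = z ∧ U ω = u} ⊆ {ω | X₁ ω = x ∧ U ω = u} :=
      fun ω h => ⟨h.1, h.2.2⟩
    calc p x z u ≤ (μ {ω | X₁ ω = x ∧ U ω = u}).toReal :=
          ENNReal.toReal_mono (hfin _) (measure_mono hsub)
    _ = c := hXU x u
  have hpq : ∀ x z u, p x z u ≤ q z u := by
    intro x z u
    exact ENNReal.toReal_mono (hfin _) (measure_mono (fun ω h => ⟨h.2.1, h.2.2⟩))
  have hrow : ∀ x u, c ≤ ∑ z, p x z u := by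
    intro x u
    rw [← hXU x u]
    exact meas_sub_real μ _ _ (fun ω h => Set.mem_iUnion.2 ⟨X₂ ω, h.1, rfl, h.2⟩)
  have hqsub : ∀ z u, q z u ≤ ∑ x, p x z u := by
    intro z u
    exact meas_sub_real μ _ _ (fun ω h => Set.mem_iUnion.2 ⟨X₁ ω, rfl, h.1, h.2⟩)
  -- entropy computations
  have hcard : (Fintype.card (Fin k × ZMod 2) : ℝ) = nR := by
    simp [Fintype.card_prod, hnR']; ring
  have hentXU : ent μ (fun ω => (X₁ ω, U ω)) = L := by
    unfold ent
    have hval : ∀ a : Fin k × ZMod 2,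
        Real.negMulLog ((μ ((fun ω => (X₁ ω, U ω)) ⁻¹' {a})).toReal) = c * L := by
      rintro ⟨x, u⟩
      have hs : (fun ω => (X₁ ω, U ω)) ⁻¹' {(x, u)} = {ω | X₁ ω = x ∧ U ω = u} := by
        ext ω; simp [Prod.ext_iff]
      rw [hs, hXU x u, aux_rw, hLdef]
    rw [Finset.sum_congr rfl (fun a _ => hval a), Finset.sum_const, Finset.card_univ,
      nsmul_eq_mul, hcard, ← mul_assoc, mul_inv_cancel₀ (by linarith : nR ≠ 0), one_mul]
  have hJ2 : ∀ (z : β) (x : Fin k) (u : ZMod 2),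
      ((fun ω => (X₂ ω, (X₁ ω, U ω))) ⁻¹' {(z, (x, u))}) =
        {ω | X₁ ω = x ∧ X₂ ω = z ∧ U ω = u} := by
    intro z x u; ext ω; simp [Prod.ext_iff]; tauto
  have hJ3 : ∀ (x : Fin k) (z : β) (u : ZMod 2),
      ((fun ω => (X₁ ω, (X₂ ω, U ω))) ⁻¹' {(x, (z, u))}) =
        {ω | X₁ ω = x ∧ X₂ ω = z ∧ U ω = u} := by
    intro x z u; ext ω; simp [Prod.ext_iff]
  have hJq : ∀ (z : β) (u : ZMod 2),
      ((fun ω => (X₂ ω, U ω)) ⁻¹' {(z, u)}) = {ω | X₂ ω = z ∧ U ω = u} := by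
    intro z u; ext ω; simp [Prod.ext_iff]
  have hent2 : ∑ x, ∑ z, ∑ u, Real.negMulLog (p x z u) = L := by
    have h2' : ent μ (fun ω => (X₂ ω, (X₁ ω, U ω))) = ent μ (fun ω => (X₁ ω, U ω)) := by
      unfold condEnt at h2; linarith
    have hL2 : ent μ (fun ω => (X₂ ω, (X₁ ω, U ω))) =
        ∑ z, ∑ x, ∑ u, Real.negMulLog (p x z u) := by
      unfold ent
      rw [Fintype.sum_prod_type]
      refine Finset.sum_congr rfl fun z _ => ?_
      rw [Fintype.sum_prod_type]
      refine Finset.sum_congr rfl fun x _ => Finset.sum_congr rfl fun u _ => ?_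
      rw [hJ2]
    calc ∑ x, ∑ z, ∑ u, Real.negMulLog (p x z u)
        = ∑ z, ∑ x, ∑ u, Real.negMulLog (p x z u) := Finset.sum_comm
    _ = ent μ (fun ω => (X₂ ω, (X₁ ω, U ω))) := hL2.symm
    _ = ent μ (fun ω => (X₁ ω, U ω)) := h2'
    _ = L := hentXU
  have hentq : ∑ z, ∑ u, Real.negMulLog (q z u) =
      ∑ x, ∑ z, ∑ u, Real.negMulLog (p x z u) := by
    have h3' : ent μ (fun ω => (X₁ ω, (X₂ ω, U ω))) = ent μ (fun ω => (X₂ ω, U ω)) := by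
      unfold condEnt at h3; linarith
    have hL3 : ent μ (fun ω => (X₁ ω, (X₂ ω, U ω))) =
        ∑ x, ∑ z, ∑ u, Real.negMulLog (p x z u) := by
      unfold ent
      rw [Fintype.sum_prod_type]
      refine Finset.sum_congr rfl fun x _ => ?_
      rw [Fintype.sum_prod_type]
      refine Finset.sum_congr rfl fun z _ => Finset.sum_congr rfl fun u _ => ?_
      rw [hJ3]
    have hLq : ent μ (fun ω => (X₂ ω, U ω)) = ∑ z, ∑ u, Real.negMulLog (q z u) := by
      unfold ent
      rw [Fintype.sum_prod_type]
      refine Finset.sum_congr rfl fun z _ => Finset.sum_congr rfl fun u _ => ?_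
      rw [hJq]
    rw [hL3, hLq] at h3'
    exact h3'.symm
  -- flattened index versions
  set P : Fin k × β × ZMod 2 → ℝ := fun i => p i.1 i.2.1 i.2.2 with hPdef
  have hflat : ∀ f : ℝ → ℝ, ∑ i, f (P i) = ∑ x, ∑ z, ∑ u, f (p x z u) := by
    intro f; rw [Fintype.sum_prod_type]
    exact Finset.sum_congr rfl fun x _ => by rw [Fintype.sum_prod_type]
  have hPent : ∑ i, Real.negMulLog (P i) = L := by
    rw [hflat]; exact hent2
  have hPT : 1 ≤ ∑ i, P i := by
    have e2 : ∑ x : Fin k, ∑ u : ZMod 2, (c:ℝ) = nR * c := by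
      rw [Finset.sum_const, Finset.sum_const, Finset.card_univ, Finset.card_univ]
      simp only [nsmul_eq_mul, hnR']
      have : (Fintype.card (ZMod 2) : ℝ) = 2 := by norm_num
      rw [this, Fintype.card_fin]; ring
    calc (1:ℝ) = nR * c := by rw [hcdef]; field_simp
    _ = ∑ x : Fin k, ∑ u : ZMod 2, (c:ℝ) := e2.symm
    _ ≤ ∑ x, ∑ u, ∑ z, p x z u :=
        Finset.sum_le_sum fun x _ => Finset.sum_le_sum fun u _ => hrow x u
    _ = ∑ x, ∑ z, ∑ u, p x z u := Finset.sum_congr rfl fun x _ => Finset.sum_comm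
    _ = ∑ i, P i := (hflat (fun t => t)).symm
  have hPle : ∀ i ∈ Finset.univ, P i * L ≤ Real.negMulLog (P i) :=
    fun i _ => aux_ge (hp0 _ _ _) (hpc _ _ _)
  have hPsumle : (∑ i, P i) * L ≤ L := by
    calc (∑ i, P i) * L = ∑ i, P i * L := Finset.sum_mul _ _ _
    _ ≤ ∑ i, Real.negMulLog (P i) := Finset.sum_le_sum hPle
    _ = L := hPent
  have hPT1 : ∑ i, P i = 1 := by nlinarith [hPT, hPsumle, hL0]
  have hPeq : ∀ i, P i * L = Real.negMulLog (P i) := by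
    have hs : ∑ i, P i * L = ∑ i, Real.negMulLog (P i) := by
      rw [← Finset.sum_mul, hPT1, one_mul, hPent]
    intro i
    exact (Finset.sum_eq_sum_iff_of_le hPle).1 hs i (Finset.mem_univ i)
  have hpvals : ∀ x z u, p x z u = 0 ∨ p x z u = c := fun x z u =>
    aux_ge_eq hc0 (hp0 x z u) (hPeq (x, (z, u)))
  -- dichotomy for q
  have hqor : ∀ z u, q z u = 0 ∨ c ≤ q z u := by
    intro z u
    by_cases h : ∀ x, p x z u = 0
    · left
      exact le_antisymm ((hqsub z u).trans (le_of_eq (Finset.sum_eq_zero fun x _ => h x)))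
        (hq0 z u)
    · right
      push_neg at h
      obtain ⟨x, hx⟩ := h
      rcases hpvals x z u with h0 | hcc
      · exact absurd h0 hx
      · exact hcc ▸ hpq x z u
  set QQ : β × ZMod 2 → ℝ := fun i => q i.1 i.2 with hQdef
  have hflatq : ∀ f : ℝ → ℝ, ∑ i, f (QQ i) = ∑ z, ∑ u, f (q z u) := by
    intro f; rw [Fintype.sum_prod_type]
  have hQent : ∑ i, Real.negMulLog (QQ i) = L := by
    rw [hflatq, hentq]; exact hent2
  have hQle : ∑ i, QQ i ≤ 1 := by
    calc ∑ i, QQ i = ∑ z, ∑ u, q z u := hflatq (fun t => t)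
    _ ≤ ∑ z, ∑ u, ∑ x, p x z u :=
        Finset.sum_le_sum fun z _ => Finset.sum_le_sum fun u _ => hqsub z u
    _ = ∑ z, ∑ x, ∑ u, p x z u := Finset.sum_congr rfl fun z _ => Finset.sum_comm
    _ = ∑ x, ∑ z, ∑ u, p x z u := Finset.sum_comm
    _ = ∑ i, P i := (hflat (fun t => t)).symm
    _ = 1 := hPT1
  have hQge : ∀ i ∈ Finset.univ, Real.negMulLog (QQ i) ≤ QQ i * L :=
    fun i _ => aux_le hc0 (hqor i.1 i.2)
  have hQsum1 : ∑ i, QQ i = 1 := by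
    have h1 : L ≤ (∑ i, QQ i) * L := by
      calc L = ∑ i, Real.negMulLog (QQ i) := hQent.symm
      _ ≤ ∑ i, QQ i * L := Finset.sum_le_sum hQge
      _ = (∑ i, QQ i) * L := by rw [Finset.sum_mul]
    nlinarith [hQle, hL0]
  have hQeq : ∀ i, Real.negMulLog (QQ i) = QQ i * L := by
    have hs : ∑ i, Real.negMulLog (QQ i) = ∑ i, QQ i * L := by
      rw [hQent, ← Finset.sum_mul, hQsum1, one_mul]
    intro i
    exact (Finset.sum_eq_sum_iff_of_le hQge).1 hs i (Finset.mem_univ i)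
  have hqvals : ∀ z u, q z u = 0 ∨ q z u = c := fun z u =>
    aux_le_eq hc0 (hqor z u) (hQeq (z, u))
  -- counting
  set A : Finset (β × ZMod 2) := Finset.univ.filter (fun i => QQ i ≠ 0) with hAdef
  have hAval : ∀ i ∈ A, QQ i = c := fun i hi =>
    (hqvals i.1 i.2).resolve_left (Finset.mem_filter.1 hi).2
  have hAsum : (A.card : ℝ) * c = 1 := by
    calc (A.card : ℝ) * c = ∑ _i ∈ A, c := by rw [Finset.sum_const, nsmul_eq_mul]
    _ = ∑ i ∈ A, QQ i := Finset.sum_congr rfl fun i hi => (hAval i hi).symm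
    _ = ∑ i, QQ i := Finset.sum_subset (Finset.subset_univ A)
        (fun i _ hi => not_not.1 fun h =>
          hi (Finset.mem_filter.2 ⟨Finset.mem_univ i, h⟩))
    _ = 1 := hQsum1
  have hnR0 : nR ≠ 0 := by linarith
  have hAcard : A.card = 2 * k := by
    have h' : (A.card : ℝ) = nR := by
      rw [hcdef] at hAsum
      field_simp at hAsum
      linarith
    rw [hnR] at h'
    exact_mod_cast h'
  set S : Finset β := Finset.univ.filter (fun z => μ (X₂ ⁻¹' {z}) ≠ 0) with hSdef
  have hSset : {z : β | μ (X₂ ⁻¹' {z}) ≠ 0} = ↑S := by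
    ext z; simp [hSdef]
  rw [hSset, Set.ncard_coe_finset] at hsupp
  have hq_ne_imp : ∀ z u, q z u ≠ 0 → μ (X₂ ⁻¹' {z}) ≠ 0 := by
    intro z u hne h0
    apply hne
    have hle : μ {ω | X₂ ω = z ∧ U ω = u} ≤ μ (X₂ ⁻¹' {z}) :=
      measure_mono (fun ω h => h.1)
    rw [h0] at hle
    show (μ {ω | X₂ ω = z ∧ U ω = u}).toReal = 0
    rw [le_zero_iff.1 hle]
    simp
  have hAsubS : A ⊆ S ×ˢ Finset.univ := by
    rintro ⟨z, u⟩ hi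
    have hne : q z u ≠ 0 := (Finset.mem_filter.1 hi).2
    exact Finset.mem_product.2
      ⟨Finset.mem_filter.2 ⟨Finset.mem_univ z, hq_ne_imp z u hne⟩, Finset.mem_univ u⟩
  have hcard2 : (S ×ˢ (Finset.univ : Finset (ZMod 2))).card = S.card * 2 := by
    rw [Finset.card_product]
    norm_num
  have hScard : S.card = k := by
    have h1 : A.card ≤ S.card * 2 := hcard2 ▸ Finset.card_le_card hAsubS
    omega
  have hAeq : A = S ×ˢ Finset.univ := by
    apply Finset.eq_of_subset_of_card_le hAsubS
    rw [hcard2, hScard, hAcard]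
    omega
  have hqS : ∀ z ∈ S, ∀ u, q z u = c := by
    intro z hz u
    have hmem : (z, u) ∈ A := hAeq ▸ Finset.mem_product.2 ⟨hz, Finset.mem_univ u⟩
    exact (hqvals z u).resolve_left (Finset.mem_filter.1 hmem).2
  -- marginal of X₂
  have hu01 : ∀ u : ZMod 2, u = 0 ∨ u = 1 := by decide
  have hrle : ∀ z, (μ (X₂ ⁻¹' {z})).toReal ≤ q z 0 + q z 1 := by
    intro z
    have hsub : X₂ ⁻¹' {z} ⊆ {ω | X₂ ω = z ∧ U ω = 0} ∪ {ω | X₂ ω = z ∧ U ω = 1} := by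
      intro ω h
      rcases hu01 (U ω) with h0 | h1
      · exact Or.inl ⟨h, h0⟩
      · exact Or.inr ⟨h, h1⟩
    have h1 : μ (X₂ ⁻¹' {z}) ≤ μ {ω | X₂ ω = z ∧ U ω = 0} + μ {ω | X₂ ω = z ∧ U ω = 1} :=
      (measure_mono hsub).trans (measure_union_le _ _)
    have h2 := ENNReal.toReal_mono (ENNReal.add_ne_top.2 ⟨hfin _, hfin _⟩) h1
    rw [ENNReal.toReal_add (hfin _) (hfin _)] at h2
    exact h2
  have hrcover : 1 ≤ ∑ z, (μ (X₂ ⁻¹' {z})).toReal := by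
    have := meas_sub_real μ Set.univ (fun z => X₂ ⁻¹' {z})
      (fun ω _ => Set.mem_iUnion.2 ⟨X₂ ω, rfl⟩)
    simpa using this
  have hzeroS : ∀ z ∉ S, (μ (X₂ ⁻¹' {z})).toReal = 0 := by
    intro z hz
    have h0 : μ (X₂ ⁻¹' {z}) = 0 :=
      not_not.1 (fun h => hz (Finset.mem_filter.2 ⟨Finset.mem_univ z, h⟩))
    simp [h0]
  have hub : ∀ z ∈ S, (μ (X₂ ⁻¹' {z})).toReal ≤ 2 * c := by
    intro z hz
    calc (μ (X₂ ⁻¹' {z})).toReal ≤ q z 0 + q z 1 := hrle z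
    _ = 2 * c := by rw [hqS z hz 0, hqS z hz 1]; ring
  have hconst : ∑ _z ∈ S, (2 * c : ℝ) = 1 := by
    rw [Finset.sum_const, nsmul_eq_mul, hScard, hcdef, hnR']
    have h2k : (2 * (k:ℝ)) ≠ 0 := by positivity
    calc (k:ℝ) * (2 * (2 * (k:ℝ))⁻¹) = (2 * (k:ℝ)) * (2 * (k:ℝ))⁻¹ := by ring
    _ = 1 := mul_inv_cancel₀ h2k
  have hrS : ∀ z ∈ S, (μ (X₂ ⁻¹' {z})).toReal = 2 * c := by
    have hsumS : ∑ z ∈ S, (μ (X₂ ⁻¹' {z})).toReal = ∑ z, (μ (X₂ ⁻¹' {z})).toReal :=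
      Finset.sum_subset (Finset.subset_univ S) (fun z _ hz => hzeroS z hz)
    have heq : ∑ z ∈ S, (μ (X₂ ⁻¹' {z})).toReal = ∑ z ∈ S, (2 * c : ℝ) :=
      le_antisymm (Finset.sum_le_sum hub) (by rw [hconst, hsumS]; exact hrcover)
    intro z hz
    exact (Finset.sum_eq_sum_iff_of_le hub).1 heq z hz
  -- marginal of U
  have hUub : ∀ u, (μ (U ⁻¹' {u})).toReal ≤ 2⁻¹ := by
    intro u
    have h1 := meas_sub_real μ (U ⁻¹' {u}) (fun x => {ω | X₁ ω = x ∧ U ω = u})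
      (fun ω h => Set.mem_iUnion.2 ⟨X₁ ω, rfl, h⟩)
    rw [Finset.sum_congr rfl (fun x _ => hXU x u)] at h1
    rw [Finset.sum_const, Finset.card_univ, nsmul_eq_mul, Fintype.card_fin] at h1
    have hkc : (k : ℝ) * c = 2⁻¹ := by
      rw [hcdef, hnR', mul_inv]
      calc (k:ℝ) * (2⁻¹ * ((k:ℝ))⁻¹) = ((k:ℝ) * ((k:ℝ))⁻¹) * 2⁻¹ := by ring
      _ = 2⁻¹ := by rw [mul_inv_cancel₀ (ne_of_gt hkR), one_mul]
    exact h1.trans (le_of_eq hkc)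
  have hUlb : 1 ≤ (μ (U ⁻¹' {0})).toReal + (μ (U ⁻¹' {1})).toReal := by
    have hsub : (Set.univ : Set Ω) ⊆ U ⁻¹' {0} ∪ U ⁻¹' {1} := by
      intro ω _
      rcases hu01 (U ω) with h0 | h1
      · exact Or.inl h0
      · exact Or.inr h1
    have h1 : (1 : ℝ≥0∞) ≤ μ (U ⁻¹' {0}) + μ (U ⁻¹' {1}) := by
      rw [← measure_univ (μ := μ)]
      exact (measure_mono hsub).trans (measure_union_le _ _)
    have h2 := ENNReal.toReal_mono (ENNReal.add_ne_top.2 ⟨hfin _, hfin _⟩) h1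
    rw [ENNReal.toReal_add (hfin _) (hfin _)] at h2
    simpa using h2
  have hUhalf : ∀ u, (μ (U ⁻¹' {u})).toReal = 2⁻¹ := by
    intro u
    rcases hu01 u with h | h <;> subst h <;> linarith [hUub 0, hUub 1, hUlb]
  refine ⟨?_, ?_, ?_⟩
  · intro u z
    by_cases hz : z ∈ S
    · have hLHSset : {ω | U ω = u ∧ X₂ ω = z} = {ω | X₂ ω = z ∧ U ω = u} :=
        Set.ext fun ω => and_comm
      have hfinmul : μ (U ⁻¹' {u}) * μ (X₂ ⁻¹' {z}) ≠ ⊤ :=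
        ENNReal.mul_ne_top (hfin _) (hfin _)
      apply (ENNReal.toReal_eq_toReal_iff' (hfin _) hfinmul).1
      rw [hLHSset, ENNReal.toReal_mul, hUhalf u, hrS z hz]
      show q z u = 2⁻¹ * (2 * c)
      rw [hqS z hz u]; ring
    · have h0 : μ (X₂ ⁻¹' {z}) = 0 :=
        not_not.1 (fun h => hz (Finset.mem_filter.2 ⟨Finset.mem_univ z, h⟩))
      rw [h0, mul_zero]
      exact le_antisymm
        ((measure_mono (fun ω (h : U ω = u ∧ X₂ ω = z) => h.2)).trans_eq h0) zero_le
  · rw [hSset, Set.ncard_coe_finset]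
    exact hScard
  · intro z hz
    have hzS : z ∈ S := Finset.mem_filter.2 ⟨Finset.mem_univ z, hz⟩
    have hfin2 : ((k : ℕ) : ℝ≥0∞)⁻¹ ≠ ⊤ := by
      simp [hk.ne']
    apply (ENNReal.toReal_eq_toReal_iff' (hfin _) hfin2).1
    rw [hrS z hzS, ENNReal.toReal_inv, ENNReal.toReal_natCast, hcdef, hnR', mul_inv,
      ← mul_assoc, mul_inv_cancel₀ (two_ne_zero), one_mul]
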